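/- Let G ⊆ A × B be a finite bipartite graph with no isolated vertices in A or B. Then log μ_{A→B}(G) = min over input distributions P_X on A of max over channels W from A to B consistent with G of (H(Y) − H(X)), where Y is the output of channel W with input X ~ P_X. -/

import Mathlib

open Real

variable {A B : Type*} [Fintype A] [Fintype B] [DecidableEq A] [DecidableEq B]

/-- The neighborhood of `S ⊆ A` in the bipartite graph `E ⊆ A × B`. -/
def nbhd (E : Finset (A × B)) (S : Finset A) : Finset B :=
  (E.filter (fun p => p.1 ∈ S)).image Prod.snd

/-- The magnification ratio `μ_{A→B}(E) = min_{∅ ≠ S ⊆ A} |N(S)|/|S|`. -/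
noncomputable def magRatio (E : Finset (A × B)) : ℝ :=
  sInf {r : ℝ | ∃ S : Finset A, S.Nonempty ∧ r = (nbhd E S).card / S.card}

/-- `p` is a probability distribution on `A`. -/
def IsDist (p : A → ℝ) : Prop := (∀ a, 0 ≤ p a) ∧ ∑ a, p a = 1

/-- `W` is a channel from `A` to `B` consistent with the bipartite graph `E`. -/
def IsChannel (E : Finset (A × B)) (W : A → B → ℝ) : Prop :=
  (∀ a b, 0 ≤ W a b) ∧ (∀ a, ∑ b, W a b = 1) ∧ ∀ a b, (a, b) ∉ E → W a b = 0

/-- Output distribution of channel `W` with input distribution `p`. -/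
def outDist (p : A → ℝ) (W : A → B → ℝ) (b : B) : ℝ := ∑ a, p a * W a b

/-- Shannon entropy (natural log) of a distribution on a finite type. -/
noncomputable def entDist {S : Type*} [Fintype S] (q : S → ℝ) : ℝ :=
  ∑ s : S, Real.negMulLog (q s)

section Aux

set_option linter.unusedSectionVars false

/-- Jensen-type bound: a sum of `≤ m` values of `negMulLog`. -/
lemma jensen_fiber {α : Type*} (F : Finset α) (r : α → ℝ) (hr : ∀ x ∈ F, 0 ≤ r x)
    (m : ℕ) (hm : F.card ≤ m) :
    ∑ x ∈ F, negMulLog (r x) ≤ negMulLog (∑ x ∈ F, r x) + (∑ x ∈ F, r x) * Real.log m := by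
  rcases F.eq_empty_or_nonempty with rfl | hF
  · simp
  set q := ∑ x ∈ F, r x with hq
  have hq0 : 0 ≤ q := Finset.sum_nonneg hr
  rcases eq_or_lt_of_le hq0 with hq0' | hq0'
  · have hz : ∀ x ∈ F, r x = 0 := by
      intro x hx
      exact (Finset.sum_eq_zero_iff_of_nonneg hr).mp hq0'.symm x hx
    rw [← hq0']
    rw [Finset.sum_congr rfl (fun x hx => by rw [hz x hx])]
    simp
  · have hn : (0:ℝ) < F.card := by exact_mod_cast Finset.card_pos.mpr hF
    have hJ := concaveOn_negMulLog.le_map_sum (t := F) (w := fun _ => (F.card : ℝ)⁻¹)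
      (p := r) (fun i _ => by positivity)
      (by rw [Finset.sum_const, nsmul_eq_mul]; exact mul_inv_cancel₀ (ne_of_gt hn)) (fun i hi => hr i hi)
    simp only [smul_eq_mul] at hJ
    have h1 : ∑ i ∈ F, (F.card : ℝ)⁻¹ * r i = q / F.card := by
      rw [← Finset.mul_sum]; ring
    rw [h1, ← Finset.mul_sum] at hJ
    have h2 : ∑ x ∈ F, negMulLog (r x) ≤ (F.card : ℝ) * negMulLog (q / F.card) := by
      rw [← mul_le_mul_iff_right₀ (inv_pos.mpr hn)]
      calc (F.card:ℝ)⁻¹ * ∑ x ∈ F, negMulLog (r x) ≤ negMulLog (q / F.card) := hJ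
        _ = (F.card:ℝ)⁻¹ * ((F.card:ℝ) * negMulLog (q / F.card)) := by field_simp
    refine h2.trans ?_
    have hlog : Real.log (q / F.card) = Real.log q - Real.log F.card := by
      rw [Real.log_div (ne_of_gt hq0') (ne_of_gt hn)]
    have expand : (F.card : ℝ) * negMulLog (q / F.card)
        = negMulLog q + q * Real.log F.card := by
      simp only [negMulLog, hlog]
      field_simp
      ring
    rw [expand]
    have : q * Real.log F.card ≤ q * Real.log m := by
      apply mul_le_mul_of_nonneg_left _ hq0
      exact Real.log_le_log hn (by exact_mod_cast hm)
    linarith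

lemma mem_nbhd {E : Finset (A × B)} {S : Finset A} {b : B} :
    b ∈ nbhd E S ↔ ∃ a ∈ S, (a, b) ∈ E := by
  simp only [nbhd, Finset.mem_image, Finset.mem_filter]
  constructor
  · rintro ⟨⟨a, b'⟩, ⟨hE, hS⟩, rfl⟩
    exact ⟨a, hS, hE⟩
  · rintro ⟨a, hS, hE⟩
    exact ⟨(a, b), ⟨hE, hS⟩, rfl⟩

lemma magRatio_le (E : Finset (A × B)) {S : Finset A} (hS : S.Nonempty) :
    magRatio E ≤ (nbhd E S).card / S.card := by
  apply csInf_le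
  · refine ⟨0, ?_⟩
    rintro r ⟨T, hT, rfl⟩
    positivity
  · exact ⟨S, hS, rfl⟩

lemma magRatio_mem (E : Finset (A × B)) [Nonempty A] :
    ∃ S : Finset A, S.Nonempty ∧ magRatio E = (nbhd E S).card / S.card := by
  have hne : {r : ℝ | ∃ S : Finset A, S.Nonempty ∧ r = (nbhd E S).card / S.card}.Nonempty :=
    ⟨_, Finset.univ, Finset.univ_nonempty, rfl⟩
  have hfin : {r : ℝ | ∃ S : Finset A, S.Nonempty ∧ r = (nbhd E S).card / S.card}.Finite := by
    apply Set.Finite.subset (Set.finite_range (fun S : Finset A => ((nbhd E S).card : ℝ) / S.card))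
    rintro r ⟨S, _, rfl⟩
    exact ⟨S, rfl⟩
  exact hne.csInf_mem hfin

lemma hall_spread (E : Finset (A × B)) (k m : ℕ)
    (hKey : ∀ S : Finset A, k * S.card ≤ m * (nbhd E S).card) :
    ∃ g : A × Fin k → B, (∀ x, (x.1, g x) ∈ E) ∧
      ∀ b, (Finset.univ.filter (fun x : A × Fin k => g x = b)).card ≤ m := by
  set t : A × Fin k → Finset (B × Fin m) :=
    fun x => (nbhd E {x.1}) ×ˢ (Finset.univ : Finset (Fin m)) with ht
  have hall : ∀ s : Finset (A × Fin k), s.card ≤ (s.biUnion t).card := by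
    intro s
    set S := s.image Prod.fst with hS
    have h1 : s.biUnion t = (nbhd E S) ×ˢ (Finset.univ : Finset (Fin m)) := by
      ext ⟨b, j⟩
      simp only [ht, Finset.mem_biUnion, Finset.mem_product, Finset.mem_univ, and_true,
        mem_nbhd, Finset.mem_singleton, hS, Finset.mem_image]
      constructor
      · rintro ⟨x, hx, a, rfl, hE⟩
        exact ⟨x.1, ⟨x, hx, rfl⟩, hE⟩
      · rintro ⟨a, ⟨x, hx, rfl⟩, hE⟩
        exact ⟨x, hx, x.1, rfl, hE⟩
    have h2 : s ⊆ S ×ˢ (Finset.univ : Finset (Fin k)) := by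
      intro x hx
      simp only [Finset.mem_product, Finset.mem_univ, and_true, hS, Finset.mem_image]
      exact ⟨x, hx, rfl⟩
    calc s.card ≤ (S ×ˢ (Finset.univ : Finset (Fin k))).card := Finset.card_le_card h2
      _ = S.card * k := by rw [Finset.card_product, Finset.card_univ, Fintype.card_fin]
      _ ≤ (nbhd E S).card * m := by
          rw [mul_comm]
          calc k * S.card ≤ m * (nbhd E S).card := hKey S
            _ = (nbhd E S).card * m := mul_comm _ _
      _ = (s.biUnion t).card := by
          rw [h1, Finset.card_product, Finset.card_univ, Fintype.card_fin]
  obtain ⟨f, hfinj, hft⟩ := (Finset.all_card_le_biUnion_card_iff_exists_injective t).mp hall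
  refine ⟨fun x => (f x).1, ?_, ?_⟩
  · intro x
    have := hft x
    simp only [ht, Finset.mem_product, mem_nbhd, Finset.mem_singleton] at this
    obtain ⟨⟨a, rfl, hE⟩, -⟩ := this
    exact hE
  · intro b
    have hmaps : ∀ x ∈ Finset.univ.filter (fun x : A × Fin k => (f x).1 = b),
        (f x).2 ∈ (Finset.univ : Finset (Fin m)) := fun x _ => Finset.mem_univ _
    have hinj : Set.InjOn (fun x => (f x).2)
        (Finset.univ.filter (fun x : A × Fin k => (f x).1 = b)) := by
      intro x hx y hy hxy
      simp only [Finset.coe_filter, Set.mem_setOf_eq] at hx hy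
      apply hfinj
      exact Prod.ext (hx.2.trans hy.2.symm) hxy
    calc (Finset.univ.filter (fun x : A × Fin k => (f x).1 = b)).card
        ≤ (Finset.univ : Finset (Fin m)).card := Finset.card_le_card_of_injOn _ hmaps hinj
      _ = m := by rw [Finset.card_univ, Fintype.card_fin]

lemma sum_outDist {E : Finset (A × B)} {p : A → ℝ} {W : A → B → ℝ}
    (hp : IsDist p) (hW : IsChannel E W) : ∑ b, outDist p W b = 1 := by
  unfold outDist
  rw [Finset.sum_comm]
  rw [Finset.sum_congr rfl (fun a _ => by rw [← Finset.mul_sum, hW.2.1 a, mul_one])]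
  exact hp.2

lemma entDist_nonneg_of_dist (p : A → ℝ) (hp : IsDist p) : 0 ≤ entDist p := by
  apply Finset.sum_nonneg
  intro a _
  apply negMulLog_nonneg (hp.1 a)
  have := Finset.single_le_sum (fun a _ => hp.1 a) (Finset.mem_univ a)
  rwa [hp.2] at this

lemma entDist_le_log_card {T : Finset B} (q : B → ℝ) (hq0 : ∀ b, 0 ≤ q b)
    (hsupp : ∀ b ∉ T, q b = 0) (hsum : ∑ b, q b = 1) :
    entDist q ≤ Real.log T.card := by
  have hTsum : ∑ b ∈ T, q b = 1 := by
    rw [← hsum]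
    exact (Finset.sum_subset (Finset.subset_univ T)
      (fun b _ hb => hsupp b hb)).symm ▸ rfl
  have hTent : entDist q = ∑ b ∈ T, negMulLog (q b) := by
    unfold entDist
    exact (Finset.sum_subset (Finset.subset_univ T)
      (fun b _ hb => by rw [hsupp b hb, negMulLog_zero])).symm
  rw [hTent]
  have := jensen_fiber T q (fun b _ => hq0 b) T.card le_rfl
  rw [hTsum] at this
  simpa using this

lemma spread_channel (E : Finset (A × B)) (k m : ℕ) (hk : 1 ≤ k)
    (g : A × Fin k → B) (hgE : ∀ x, (x.1, g x) ∈ E)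
    (hfib : ∀ b, (Finset.univ.filter (fun x : A × Fin k => g x = b)).card ≤ m) :
    ∃ W : A → B → ℝ, IsChannel E W ∧ ∀ p : A → ℝ, IsDist p →
      entDist p + Real.log k ≤ entDist (outDist p W) + Real.log m := by
  have hk0 : (0:ℝ) < k := by exact_mod_cast hk
  set cnt : A → B → ℕ := fun a b => (Finset.univ.filter (fun i : Fin k => g (a, i) = b)).card
    with hcnt
  set W : A → B → ℝ := fun a b => (cnt a b : ℝ) / k with hW
  have hrow : ∀ a, ∑ b, (cnt a b : ℕ) = k := by
    intro a
    have := Finset.card_eq_sum_card_fiberwise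
      (f := fun i : Fin k => g (a, i)) (s := Finset.univ) (t := Finset.univ)
      (fun x _ => Finset.mem_univ _)
    simpa [hcnt] using this.symm
  have hchan : IsChannel E W := by
    refine ⟨fun a b => by positivity, fun a => ?_, fun a b hab => ?_⟩
    · rw [hW]
      simp only
      rw [← Finset.sum_div]
      rw [show ∑ b, (cnt a b : ℝ) = ((∑ b, cnt a b : ℕ) : ℝ) by push_cast; ring]
      rw [hrow a]
      field_simp
    · have : cnt a b = 0 := by
        rw [hcnt]
        simp only [Finset.card_eq_zero, Finset.filter_eq_empty_iff]
        intro i _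
        intro hgi
        exact hab (by simpa [hgi] using hgE (a, i))
      simp [hW, this]
  refine ⟨W, hchan, fun p hp => ?_⟩
  set q := outDist p W with hq
  have fiber_eq : ∀ b, q b = ∑ x ∈ Finset.univ.filter (fun x : A × Fin k => g x = b),
      p x.1 / k := by
    intro b
    rw [Finset.sum_filter, Fintype.sum_prod_type]
    rw [hq]
    unfold outDist
    apply Finset.sum_congr rfl
    intro a _
    simp only [hW, hcnt, div_eq_mul_inv]
    rw [← Finset.sum_filter, Finset.sum_const, nsmul_eq_mul]
    ring
  have lift_ent : ∑ x : A × Fin k, negMulLog (p x.1 / k) = entDist p + Real.log k := by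
    rw [Fintype.sum_prod_type]
    have hconst : ∀ a : A, ∑ _i : Fin k, negMulLog (p a / k) = (k:ℝ) * negMulLog (p a / k) := by
      intro a; rw [Finset.sum_const, Finset.card_univ, Fintype.card_fin, nsmul_eq_mul]
    rw [Finset.sum_congr rfl (fun a _ => hconst a)]
    have expand : ∀ a : A, (k:ℝ) * negMulLog (p a / k)
        = negMulLog (p a) + p a * Real.log k := by
      intro a
      rw [div_eq_mul_inv, negMulLog_mul,
        show ((k:ℝ)⁻¹).negMulLog = (k:ℝ)⁻¹ * Real.log k by
          rw [Real.negMulLog, Real.log_inv]; ring]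
      have hkne : (k:ℝ) ≠ 0 := ne_of_gt hk0
      rw [Real.negMulLog]
      field_simp
    rw [Finset.sum_congr rfl (fun a _ => expand a), Finset.sum_add_distrib, ← Finset.sum_mul,
      hp.2, one_mul, entDist]
  have part : ∑ x : A × Fin k, negMulLog (p x.1 / k)
      = ∑ b, ∑ x ∈ Finset.univ.filter (fun x : A × Fin k => g x = b), negMulLog (p x.1 / k) :=
    (Finset.sum_fiberwise_of_maps_to (fun x _ => Finset.mem_univ (g x)) _).symm
  have hqsum : ∑ b, q b = 1 := sum_outDist hp hchan
  have key : ∑ b, ∑ x ∈ Finset.univ.filter (fun x : A × Fin k => g x = b),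
      negMulLog (p x.1 / k) ≤ entDist q + Real.log m := by
    have step : ∀ b, ∑ x ∈ Finset.univ.filter (fun x : A × Fin k => g x = b),
        negMulLog (p x.1 / k) ≤ negMulLog (q b) + q b * Real.log m := by
      intro b
      have := jensen_fiber (Finset.univ.filter (fun x : A × Fin k => g x = b))
        (fun x => p x.1 / k) (fun x _ => div_nonneg (hp.1 _) (le_of_lt hk0)) m (hfib b)
      rwa [← fiber_eq b] at this
    calc ∑ b, ∑ x ∈ Finset.univ.filter (fun x : A × Fin k => g x = b), negMulLog (p x.1 / k)
        ≤ ∑ b, (negMulLog (q b) + q b * Real.log m) := Finset.sum_le_sum (fun b _ => step b)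
      _ = entDist q + (∑ b, q b) * Real.log m := by
          rw [Finset.sum_add_distrib, ← Finset.sum_mul, entDist]
      _ = entDist q + Real.log m := by rw [hqsum, one_mul]
  linarith [lift_ent, part, key]

end Aux

/-- Entropic characterization of the magnification ratio:
`log μ_{A→B}(E) = min_{P_X} max_{W ∈ W(E)} (H(Y) - H(X))`. -/
theorem stmt15 (E : Finset (A × B))
    (hA : ∀ a : A, ∃ b : B, (a, b) ∈ E) (hB : ∀ b : B, ∃ a : A, (a, b) ∈ E) :
    Real.log (magRatio E) =
      sInf {r : ℝ | ∃ p : A → ℝ, IsDist p ∧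
        r = sSup {s : ℝ | ∃ W : A → B → ℝ, IsChannel E W ∧
              s = entDist (outDist p W) - entDist p}} := by
  rcases isEmpty_or_nonempty A with hAe | hAne
  · -- degenerate case: A (hence everything) is empty
    have h1 : {r : ℝ | ∃ S : Finset A, S.Nonempty ∧ r = (nbhd E S).card / S.card} = ∅ := by
      apply Set.eq_empty_iff_forall_notMem.mpr
      rintro r ⟨S, ⟨a, _⟩, _⟩
      exact hAe.false a
    have h2 : {r : ℝ | ∃ p : A → ℝ, IsDist p ∧
        r = sSup {s : ℝ | ∃ W : A → B → ℝ, IsChannel E W ∧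
              s = entDist (outDist p W) - entDist p}} = ∅ := by
      apply Set.eq_empty_iff_forall_notMem.mpr
      rintro r ⟨p, hp, _⟩
      have := hp.2
      rw [Finset.univ_eq_empty, Finset.sum_empty] at this
      exact one_ne_zero this.symm
    rw [magRatio, h1, h2, Real.sInf_empty, Real.log_zero]
  · -- main case
    have hBne : Nonempty B := ⟨(hA (Classical.arbitrary A)).choose⟩
    obtain ⟨S₀, hS₀ne, hμ⟩ := magRatio_mem E
    set k := (nbhd E S₀).card with hk
    set m := S₀.card with hm
    have hm1 : 1 ≤ m := Finset.card_pos.mpr hS₀ne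
    have hk1 : 1 ≤ k := by
      apply Finset.card_pos.mpr
      obtain ⟨a, ha⟩ := hS₀ne
      obtain ⟨b, hb⟩ := hA a
      exact ⟨b, mem_nbhd.mpr ⟨a, ha, hb⟩⟩
    have hmR : (0:ℝ) < m := by exact_mod_cast hm1
    have hkR : (0:ℝ) < k := by exact_mod_cast hk1
    have hKey : ∀ S : Finset A, k * S.card ≤ m * (nbhd E S).card := by
      intro S
      rcases S.eq_empty_or_nonempty with rfl | hSne
      · simp
      · have hle := magRatio_le E hSne
        rw [hμ] at hle
        have hSR : (0:ℝ) < S.card := by exact_mod_cast Finset.card_pos.mpr hSne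
        rw [div_le_div_iff₀ hmR hSR] at hle
        have : (k:ℝ) * S.card ≤ m * (nbhd E S).card := by
          calc (k:ℝ) * S.card ≤ (nbhd E S).card * m := hle
            _ = m * (nbhd E S).card := mul_comm _ _
        exact_mod_cast this
    obtain ⟨g, hgE, hfib⟩ := hall_spread E k m hKey
    obtain ⟨W₀, hW₀, hEnt⟩ := spread_channel E k m hk1 g hgE hfib
    have logμ : Real.log (magRatio E) = Real.log k - Real.log m := by
      rw [hμ, Real.log_div (ne_of_gt hkR) (ne_of_gt hmR)]
    set Inner : (A → ℝ) → Set ℝ := fun p =>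
      {s : ℝ | ∃ W : A → B → ℝ, IsChannel E W ∧
        s = entDist (outDist p W) - entDist p} with hInner
    set RHS : Set ℝ := {r : ℝ | ∃ p : A → ℝ, IsDist p ∧ r = sSup (Inner p)} with hRHS
    -- basic facts
    have hInnerNe : ∀ p : A → ℝ, (Inner p).Nonempty := fun p => ⟨_, W₀, hW₀, rfl⟩
    have hInnerBdd : ∀ p : A → ℝ, IsDist p → BddAbove (Inner p) := by
      intro p hp
      refine ⟨Real.log (Fintype.card B), ?_⟩
      rintro s ⟨W, hW, rfl⟩
      have hq0 : ∀ b, 0 ≤ outDist p W b :=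
        fun b => Finset.sum_nonneg fun a _ => mul_nonneg (hp.1 a) (hW.1 a b)
      have hle : entDist (outDist p W) ≤ Real.log (Fintype.card B) := by
        have := entDist_le_log_card (T := (Finset.univ : Finset B)) (outDist p W) hq0
          (fun b hb => absurd (Finset.mem_univ b) hb) (sum_outDist hp hW)
        rwa [Finset.card_univ] at this
      have := entDist_nonneg_of_dist p hp
      linarith
    -- every element of RHS is at least log k - log m
    have hlow : ∀ r ∈ RHS, Real.log k - Real.log m ≤ r := by
      rintro r ⟨p, hp, rfl⟩
      have h1 : entDist p + Real.log k ≤ entDist (outDist p W₀) + Real.log m := hEnt p hp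
      have h2 : entDist (outDist p W₀) - entDist p ∈ Inner p := ⟨W₀, hW₀, rfl⟩
      have h3 := le_csSup (hInnerBdd p hp) h2
      linarith
    -- the uniform distribution on S₀ witnesses the upper bound
    set p₀ : A → ℝ := fun a => if a ∈ S₀ then (m:ℝ)⁻¹ else 0 with hp₀def
    have hp₀ : IsDist p₀ := by
      constructor
      · intro a
        rw [hp₀def]
        dsimp only
        split <;> positivity
      · rw [hp₀def]
        dsimp only
        rw [Finset.sum_ite_mem, Finset.univ_inter, Finset.sum_const, nsmul_eq_mul, ← hm]
        field_simp
    have hent_p₀ : entDist p₀ = Real.log m := by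
      unfold entDist
      rw [hp₀def]
      dsimp only
      have : ∀ a : A, negMulLog (if a ∈ S₀ then (m:ℝ)⁻¹ else 0)
          = if a ∈ S₀ then negMulLog ((m:ℝ)⁻¹) else 0 := by
        intro a; split <;> simp
      rw [Finset.sum_congr rfl (fun a _ => this a), Finset.sum_ite_mem, Finset.univ_inter,
        Finset.sum_const, nsmul_eq_mul, ← hm,
        show negMulLog ((m:ℝ)⁻¹) = (m:ℝ)⁻¹ * Real.log m by
          rw [Real.negMulLog, Real.log_inv]; ring]
      field_simp
    have hupp : sSup (Inner p₀) ≤ Real.log k - Real.log m := by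
      apply csSup_le (hInnerNe p₀)
      rintro s ⟨W, hW, rfl⟩
      have hq0 : ∀ b, 0 ≤ outDist p₀ W b :=
        fun b => Finset.sum_nonneg fun a _ => mul_nonneg (hp₀.1 a) (hW.1 a b)
      have hsupp : ∀ b ∉ nbhd E S₀, outDist p₀ W b = 0 := by
        intro b hb
        apply Finset.sum_eq_zero
        intro a _
        by_cases haS : a ∈ S₀
        · have hWab : W a b = 0 := by
            apply hW.2.2
            intro hE
            exact hb (mem_nbhd.mpr ⟨a, haS, hE⟩)
          rw [hWab, mul_zero]
        · rw [hp₀def]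
          dsimp only
          rw [if_neg haS, zero_mul]
      have hle : entDist (outDist p₀ W) ≤ Real.log k := by
        have := entDist_le_log_card (T := nbhd E S₀) (outDist p₀ W) hq0 hsupp
          (sum_outDist hp₀ hW)
        rwa [← hk] at this
      rw [hent_p₀]
      linarith
    have hmem : sSup (Inner p₀) ∈ RHS := ⟨p₀, hp₀, rfl⟩
    rw [logμ]
    apply le_antisymm
    · exact le_csInf ⟨_, hmem⟩ hlow
    · exact (csInf_le ⟨Real.log k - Real.log m, fun r hr => hlow r hr⟩ hmem).trans hupp
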